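/- Let L be a quasi-unimodular lattice whose genus is at least 1, i.e., L contains two elements γ, δ with ⟨γ,δ⟩ = 1. Then the abelian group Λ²L is spanned by elements of the form γ ∧ δ where γ, δ ∈ L are primitive and ⟨γ,δ⟩ = 1. -/

import Mathlib

/-- An element of a (free abelian) lattice is primitive if it is not a multiple `m • w`
with `m ≥ 2` and `w ≠ 0`. -/
def IsPrimitive {L : Type*} [AddCommGroup L] (v : L) : Prop :=
  ¬ ∃ (m : ℤ) (w : L), 2 ≤ m ∧ w ≠ 0 ∧ v = m • w

lemma isPrimitive_of_pair_left {L : Type*} [AddCommGroup L] [Module ℤ L]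
    (B : L →ₗ[ℤ] L →ₗ[ℤ] ℤ) {γ δ : L} (h : B γ δ = 1) : IsPrimitive γ := by
  rintro ⟨m, w, hm, hw, rfl⟩
  have h1 : m * B w δ = 1 := by
    simpa [LinearMap.map_smul, smul_eq_mul] using h
  have := Int.le_of_dvd one_pos ⟨B w δ, h1.symm⟩
  omega

lemma isPrimitive_of_pair_right {L : Type*} [AddCommGroup L] [Module ℤ L]
    (B : L →ₗ[ℤ] L →ₗ[ℤ] ℤ) {γ δ : L} (h : B γ δ = 1) : IsPrimitive δ := by
  rintro ⟨m, w, hm, hw, rfl⟩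
  have h1 : m * B γ w = 1 := by
    simpa [map_smul, smul_eq_mul] using h
  have := Int.le_of_dvd one_pos ⟨B γ w, h1.symm⟩
  omega

/-- If `L` is a quasi-unimodular lattice of genus at least one (i.e. there
are `γ, δ ∈ L` with `⟨γ, δ⟩ = 1`), then `Λ²L` is spanned over `ℤ` by the elements `γ ∧ δ`
with `γ, δ` primitive and `⟨γ, δ⟩ = 1`. -/
theorem stmt_5 (L : Type*) [AddCommGroup L] [Module ℤ L] [Module.Free ℤ L]
    [Module.Finite ℤ L]
    (B : L →ₗ[ℤ] L →ₗ[ℤ] ℤ) (hB : ∀ x, B x x = 0)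
    (hgenus : ∃ γ δ : L, B γ δ = 1) :
    Submodule.span ℤ {x : ExteriorAlgebra ℤ L | ∃ γ δ : L, IsPrimitive γ ∧ IsPrimitive δ ∧
        B γ δ = 1 ∧ x = ExteriorAlgebra.ι ℤ γ * ExteriorAlgebra.ι ℤ δ} =
      ⋀[ℤ]^2 L := by
  obtain ⟨e, f, hef⟩ := hgenus
  set ι := ExteriorAlgebra.ι ℤ (M := L) with hι
  set S := Submodule.span ℤ {x : ExteriorAlgebra ℤ L | ∃ γ δ : L, IsPrimitive γ ∧
      IsPrimitive δ ∧ B γ δ = 1 ∧ x = ι γ * ι δ} with hS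
  -- any pair with pairing 1 gives an element of S
  have hpair : ∀ γ δ : L, B γ δ = 1 → ι γ * ι δ ∈ S := by
    intro γ δ h
    exact Submodule.subset_span ⟨γ, δ, isPrimitive_of_pair_left B h,
      isPrimitive_of_pair_right B h, h, rfl⟩
  -- if B u f = 1 then u ∧ v ∈ S for every v
  have stepA : ∀ u : L, B u f = 1 → ∀ v : L, ι u * ι v ∈ S := by
    intro u hu v
    have key : ι u * ι v =
        ι u * ι (v - (B u v - 1) • f) + (B u v - 1) • (ι u * ι f) := by
      simp only [map_sub, map_smul, map_zsmul, mul_sub, mul_smul_comm]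
      abel
    rw [key]
    refine Submodule.add_mem _ (hpair _ _ ?_) (Submodule.smul_mem _ _ (hpair _ _ hu))
    simp [map_sub, map_smul, smul_eq_mul, hu]
  -- general case
  have stepC : ∀ u v : L, ι u * ι v ∈ S := by
    intro u v
    set u' := u + (1 - B u f) • e with hu'
    have hu'f : B u' f = 1 := by
      simp [hu', map_add, map_smul, smul_eq_mul, hef]
    have key : ι u * ι v = ι u' * ι v - (1 - B u f) • (ι e * ι v) := by
      simp only [hu', map_add, map_smul, map_zsmul, add_mul, smul_mul_assoc]
      abel
    rw [key]
    exact Submodule.sub_mem _ (stepA u' hu'f v)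
      (Submodule.smul_mem _ _ (stepA e hef v))
  apply le_antisymm
  · intro x hx
    induction hx using Submodule.span_induction with
    | mem x hx =>
      obtain ⟨γ, δ, -, -, -, rfl⟩ := hx
      show ι γ * ι δ ∈ LinearMap.range ι ^ 2
      rw [pow_two]
      exact Submodule.mul_mem_mul (LinearMap.mem_range_self ι γ)
        (LinearMap.mem_range_self ι δ)
    | zero => exact Submodule.zero_mem _
    | add x y _ _ hx hy => exact Submodule.add_mem _ hx hy
    | smul a x _ hx => exact zsmul_mem hx a
  · intro x hx
    have hx' : x ∈ LinearMap.range ι * LinearMap.range ι := by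
      rw [← pow_two]
      exact hx
    refine Submodule.mul_induction_on hx' ?_ ?_
    · rintro _ ⟨u, rfl⟩ _ ⟨v, rfl⟩
      exact stepC u v
    · intro a b ha hb
      exact S.add_mem ha hb
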